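/- Let z ∈ C \ K_∞ and let e(ζ) = Σ_{i≥0} α_i ζ^{q^i} be an entire 𝔽_q-linear series whose zero set is exactly Λ_z = A + Az. For δ ∈ GL₂(A) (entries in A, determinant in 𝔽_q^×) write J_δ(z) := c_δ z + d_δ and δ(z) := (a_δ z + b_δ)/(c_δ z + d_δ), and define e_{δ(z)}(ζ) := J_δ(z)^{−1}·e(J_δ(z)·ζ), s_1(δ(z),t) := Σ_{i≥0} e_{δ(z)}(δ(z)/θ^{i+1}) t^i, s_2(δ(z),t) := Σ_{i≥0} e_{δ(z)}(1/θ^{i+1}) t^i (these s_2 series are units of C[[t]]), 𝐳(δ(z)) := s_1(δ(z),t)/s_2(δ(z),t) ∈ C[[t]], and for γ ∈ GL₂(A), 𝐉_γ(δ(z)) := c̄_γ(t)·𝐳(δ(z)) + d̄_γ(t). Then for all γ, δ ∈ GL₂(A) one has the cocycle identity 𝐉_{γδ}(z) = 𝐉_γ(δ(z))·𝐉_δ(z) in C[[t]]. -/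

import Mathlib

/-- `s_1(z,t) = ∑ E(z/θ^{i+1}) t^i` for an exponential `E`. -/
noncomputable def s1Ser {C : Type*} [Field C] (E : C → C) (θ z : C) : PowerSeries C :=
  PowerSeries.mk fun i => E (z / θ ^ (i + 1))

/-- `s_2(z,t) = ∑ E(1/θ^{i+1}) t^i` for an exponential `E`. -/
noncomputable def s2Ser {C : Type*} [Field C] (E : C → C) (θ : C) : PowerSeries C :=
  PowerSeries.mk fun i => E (1 / θ ^ (i + 1))

/-- `𝐳 = s_1/s_2 ∈ C[[t]]`. -/
noncomputable def zSer {C : Type*} [Field C] (E : C → C) (θ z : C) : PowerSeries C :=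
  s1Ser E θ z * (s2Ser E θ)⁻¹

/-- The deformed factor of automorphy `𝐉_γ = c̄_γ(t)·𝐳 + d̄_γ(t)`, for a matrix with
lower row `(cp, dp)` (polynomials over `A`, substituted at `t`). -/
noncomputable def JSer {C : Type*} [Field C] (cp dp : Polynomial C) (E : C → C)
    (θ z : C) : PowerSeries C :=
  (cp : PowerSeries C) * zSer E θ z + (dp : PowerSeries C)

/-- The renormalized exponential `e_{δ(z)}(ζ) = J_δ(z)⁻¹ E(J_δ(z) ζ)`. -/
noncomputable def expTw {C : Type*} [Field C] (E : C → C) (j : C) : C → C :=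
  fun ζ => j⁻¹ * E (j * ζ)

private lemma summable_aux {C : Type*} [NormedField C] [CompleteSpace C] [IsUltrametricDist C]
    {q : ℕ} (hq0 : 0 < q) (α : ℕ → C)
    (hdecay : ∀ r : ℝ, 0 < r →
      Filter.Tendsto (fun i : ℕ => ‖α i‖ * r ^ (q ^ i)) Filter.atTop (nhds 0))
    (x : C) : Summable fun i : ℕ => α i * x ^ q ^ i := by
  rcases eq_or_ne x 0 with rfl | hx
  · refine summable_zero.congr fun i => ?_
    rw [zero_pow (pow_pos hq0 i).ne', mul_zero]
  · have hr : (0:ℝ) < ‖x‖ := norm_pos_iff.2 hx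
    have h := hdecay _ hr
    rw [Metric.tendsto_atTop] at h
    rw [summable_iff_vanishing_norm]
    intro ε hε
    obtain ⟨N, hN⟩ := h (ε/2) (by linarith)
    refine ⟨Finset.range N, fun t ht => ?_⟩
    have hbound : ∀ i ∈ t, ‖α i * x ^ q ^ i‖ ≤ ε/2 := by
      intro i hi
      have hiN : N ≤ i := by
        by_contra hlt
        exact (Finset.disjoint_left.1 ht) hi (Finset.mem_range.2 (by omega : i < N))
      have h2 := hN i hiN
      rw [Real.dist_eq, sub_zero, abs_of_nonneg (by positivity)] at h2
      calc ‖α i * x ^ q ^ i‖ = ‖α i‖ * ‖x‖ ^ q ^ i := by rw [norm_mul, norm_pow]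
        _ ≤ ε/2 := le_of_lt h2
    calc ‖∑ i ∈ t, α i * x ^ q ^ i‖ ≤ ε/2 :=
        IsUltrametricDist.norm_sum_le_of_forall_le_of_nonneg (by linarith) hbound
      _ < ε := by linarith

set_option maxHeartbeats 1000000 in
theorem J_cocycle
    {C : Type*} [NormedField C] [CompleteSpace C] [IsAlgClosed C] [IsUltrametricDist C]
    (p e : ℕ) (hp : p.Prime) (he : 0 < e) [CharP C p]
    (q : ℕ) (hq : q = p ^ e)
    (θ : C) (hθ : ‖θ‖ = (q : ℝ))
    (Kinf : Subfield C) (hθK : θ ∈ Kinf) (hFqK : ∀ c : C, c ^ q = c → c ∈ Kinf)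
    (z : C) (hz : z ∉ Kinf)
    (α : ℕ → C) (hα0 : α 0 = 1)
    (hdecay : ∀ r : ℝ, 0 < r →
      Filter.Tendsto (fun i : ℕ => ‖α i‖ * r ^ (q ^ i)) Filter.atTop (nhds 0))
    (E : C → C) (hE : ∀ ζ : C, E ζ = ∑' i : ℕ, α i * ζ ^ q ^ i)
    (hker : ∀ x : C, E x = 0 ↔
      ∃ a b : Polynomial C, (∀ n : ℕ, a.coeff n ^ q = a.coeff n) ∧
        (∀ n : ℕ, b.coeff n ^ q = b.coeff n) ∧ x = a.eval θ + b.eval θ * z)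
    (aγ bγ cγ dγ aδ bδ cδ dδ : Polynomial C)
    (haγ : ∀ n : ℕ, aγ.coeff n ^ q = aγ.coeff n)
    (hbγ : ∀ n : ℕ, bγ.coeff n ^ q = bγ.coeff n)
    (hcγ : ∀ n : ℕ, cγ.coeff n ^ q = cγ.coeff n)
    (hdγ : ∀ n : ℕ, dγ.coeff n ^ q = dγ.coeff n)
    (haδ : ∀ n : ℕ, aδ.coeff n ^ q = aδ.coeff n)
    (hbδ : ∀ n : ℕ, bδ.coeff n ^ q = bδ.coeff n)
    (hcδ : ∀ n : ℕ, cδ.coeff n ^ q = cδ.coeff n)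
    (hdδ : ∀ n : ℕ, dδ.coeff n ^ q = dδ.coeff n)
    (uγ : C) (huγ : uγ ^ q = uγ) (huγ0 : uγ ≠ 0)
    (hdetγ : aγ * dγ - bγ * cγ = Polynomial.C uγ)
    (uδ : C) (huδ : uδ ^ q = uδ) (huδ0 : uδ ≠ 0)
    (hdetδ : aδ * dδ - bδ * cδ = Polynomial.C uδ) :
    JSer (cγ * aδ + dγ * cδ) (cγ * bδ + dγ * dδ) E θ z
      = JSer cγ dγ (expTw E (cδ.eval θ * z + dδ.eval θ)) θ
            ((aδ.eval θ * z + bδ.eval θ) / (cδ.eval θ * z + dδ.eval θ))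
          * JSer cδ dδ E θ z := by
  haveI : Fact p.Prime := ⟨hp⟩
  haveI : ExpChar C p := ExpChar.prime hp
  have hq1 : 1 < q := by rw [hq]; exact Nat.one_lt_pow he.ne' hp.one_lt
  have hq0 : 0 < q := by omega
  have hqR : (1:ℝ) < (q:ℝ) := by exact_mod_cast hq1
  have hθ0 : θ ≠ 0 := by
    intro h; rw [h, norm_zero] at hθ; linarith [hθ.symm]
  -- basic properties of E
  have hsum : ∀ x : C, Summable fun i : ℕ => α i * x ^ q ^ i := summable_aux hq0 α hdecay
  have hadd : ∀ x y : C, E (x + y) = E x + E y := by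
    intro x y
    rw [hE, hE, hE, ← Summable.tsum_add (hsum x) (hsum y)]
    congr 1; funext i
    have hqi : q ^ i = p ^ (e * i) := by rw [hq, pow_mul]
    rw [← mul_add]
    congr 1
    rw [hqi]
    exact add_pow_char_pow x y p (e * i)
  have hfix_pow : ∀ c : C, c ^ q = c → ∀ i : ℕ, c ^ q ^ i = c := by
    intro c hc i
    induction i with
    | zero => simp
    | succ n ih => rw [pow_succ, pow_mul, ih, hc]
  have hsmul : ∀ c : C, c ^ q = c → ∀ x : C, E (c * x) = c * E x := by
    intro c hc x
    rw [hE, hE, ← tsum_mul_left]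
    congr 1; funext i
    rw [mul_pow, hfix_pow c hc i]; ring
  set Ehom : C →+ C := AddMonoidHom.mk' E hadd with hEhom
  -- Frobenius fixed polynomials
  set φ : C →+* C := iterateFrobenius C p e with hφdef
  have hφ : ∀ x : C, φ x = x ^ q := by
    intro x; rw [hφdef, iterateFrobenius_def, ← hq]
  have hfixiff : ∀ b : Polynomial C, (∀ n, b.coeff n ^ q = b.coeff n) ↔ b.map φ = b := by
    intro b
    constructor
    · intro h
      ext n
      rw [Polynomial.coeff_map, hφ, h]
    · intro h n
      conv_rhs => rw [← h]
      rw [Polynomial.coeff_map, hφ]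
  have haγ' := (hfixiff aγ).1 haγ
  have hbγ' := (hfixiff bγ).1 hbγ
  have hcγ' := (hfixiff cγ).1 hcγ
  have hdγ' := (hfixiff dγ).1 hdγ
  have haδ' := (hfixiff aδ).1 haδ
  have hbδ' := (hfixiff bδ).1 hbδ
  have hcδ' := (hfixiff cδ).1 hcδ
  have hdδ' := (hfixiff dδ).1 hdδ
  -- evaluation of a nonzero fixed polynomial at θ is nonzero
  have hcoefnorm1 : ∀ (b : Polynomial C), b.map φ = b → ∀ n, b.coeff n ≠ 0 → ‖b.coeff n‖ = 1 := by
    intro b hb n h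
    have hc : b.coeff n ^ q = b.coeff n := (hfixiff b).2 hb n
    have h1 : b.coeff n ^ (q - 1) = 1 := by
      have h2 : b.coeff n ^ (q - 1) * b.coeff n = b.coeff n := by
        rw [← pow_succ, show q - 1 + 1 = q by omega, hc]
      have := mul_right_cancel₀ h (h2.trans (one_mul (b.coeff n)).symm)
      exact this
    have hn1 : ‖b.coeff n‖ ^ (q-1) = 1 := by rw [← norm_pow, h1, norm_one]
    have hpos : 0 < ‖b.coeff n‖ := norm_pos_iff.2 h
    by_contra hne
    rcases lt_or_gt_of_ne hne with hlt | hgt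
    · have := pow_lt_one₀ (le_of_lt hpos) hlt (by omega : q - 1 ≠ 0)
      rw [hn1] at this; exact lt_irrefl 1 this
    · have := one_lt_pow₀ hgt (by omega : q - 1 ≠ 0)
      rw [hn1] at this; exact lt_irrefl 1 this
  have heval_ne : ∀ b : Polynomial C, b.map φ = b → b ≠ 0 → b.eval θ ≠ 0 := by
    intro b hb hb0 hev
    set d := b.natDegree with hd
    have hev' := Polynomial.eval_eq_sum_range (p := b) θ
    rw [Finset.sum_range_succ, hev] at hev'
    have hlead : b.coeff d ≠ 0 := by
      rw [hd]
      exact Polynomial.leadingCoeff_ne_zero.2 hb0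
    have hleadnorm : ‖b.coeff d * θ ^ d‖ = (q:ℝ)^d := by
      rw [norm_mul, norm_pow, hθ, hcoefnorm1 b hb d hlead, one_mul]
    have hrest : ‖∑ k ∈ Finset.range d, b.coeff k * θ ^ k‖ ≤ (q:ℝ)^d - 1 := by
      calc ‖∑ k ∈ Finset.range d, b.coeff k * θ ^ k‖
          ≤ ∑ k ∈ Finset.range d, ‖b.coeff k * θ ^ k‖ := norm_sum_le _ _
        _ ≤ ∑ k ∈ Finset.range d, (q:ℝ)^k := by
            refine Finset.sum_le_sum fun k _ => ?_
            rw [norm_mul, norm_pow, hθ]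
            rcases eq_or_ne (b.coeff k) 0 with h | h
            · rw [h, norm_zero, zero_mul]; positivity
            · rw [hcoefnorm1 b hb k h, one_mul]
        _ ≤ (q:ℝ)^d - 1 := by
            have hgs := geom_sum_mul (q:ℝ) d
            have hS0 : (0:ℝ) ≤ ∑ k ∈ Finset.range d, (q:ℝ)^k :=
              Finset.sum_nonneg fun k _ => by positivity
            have hqR2 : (2:ℝ) ≤ (q:ℝ) := by exact_mod_cast hq1
            nlinarith [mul_nonneg hS0 (by linarith : (0:ℝ) ≤ (q:ℝ) - 2)]
    have heq : b.coeff d * θ ^ d = -(∑ k ∈ Finset.range d, b.coeff k * θ ^ k) := by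
      linear_combination -hev'
    rw [heq, norm_neg] at hleadnorm
    have h1 : (1:ℝ) ≤ (q:ℝ)^d := one_le_pow₀ (le_of_lt hqR)
    rw [hleadnorm] at hrest
    linarith
  have hKeval : ∀ b : Polynomial C, b.map φ = b → b.eval θ ∈ Kinf := by
    intro b hb
    rw [Polynomial.eval_eq_sum_range]
    exact Subfield.sum_mem _ fun k _ =>
      Subfield.mul_mem _ (hFqK _ ((hfixiff b).2 hb k)) (Subfield.pow_mem _ hθK k)
  have hindep : ∀ a b : Polynomial C, a.map φ = a → b.map φ = b →
      a.eval θ + b.eval θ * z = 0 → a = 0 ∧ b = 0 := by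
    intro a b ha hb h
    have hbz : b = 0 := by
      by_contra hb0
      have hbe := heval_ne b hb hb0
      have hzeq : z = -a.eval θ / b.eval θ := by
        field_simp
        linear_combination h
      exact hz (hzeq ▸ Subfield.div_mem _ (Subfield.neg_mem _ (hKeval a ha)) (hKeval b hb))
    refine ⟨?_, hbz⟩
    rw [hbz] at h
    simp only [Polynomial.eval_zero, zero_mul, add_zero] at h
    by_contra ha0
    exact heval_ne a ha ha0 h
  have hEker0 : ∀ a b : Polynomial C, a.map φ = a → b.map φ = b →
      E (a.eval θ + b.eval θ * z) = 0 :=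
    fun a b ha hb => (hker _).2 ⟨a, b, (hfixiff a).2 ha, (hfixiff b).2 hb, rfl⟩
  have hXm : ∀ m : ℕ, (Polynomial.X ^ m : Polynomial C).map φ = Polynomial.X ^ m := by
    intro m; rw [Polynomial.map_pow, Polynomial.map_X]
  have hΛ : ∀ a b : Polynomial C, a.map φ = a → b.map φ = b → ∀ m : ℕ,
      E (θ ^ m * (a.eval θ + b.eval θ * z)) = 0 := by
    intro a b ha hb m
    have h1 : θ ^ m * (a.eval θ + b.eval θ * z)
        = (Polynomial.X^m*a).eval θ + (Polynomial.X^m*b).eval θ * z := by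
      simp only [Polynomial.eval_mul, Polynomial.eval_pow, Polynomial.eval_X]
      ring
    rw [h1]
    exact hEker0 _ _ (by rw [Polynomial.map_mul, hXm, ha]) (by rw [Polynomial.map_mul, hXm, hb])
  -- the basic series S x
  set S : C → PowerSeries C := fun x => PowerSeries.mk fun i => E (x / θ ^ (i+1)) with hSdef
  have hSadd : ∀ x y : C, S (x + y) = S x + S y := by
    intro x y
    ext n
    simp only [hSdef, PowerSeries.coeff_mk, map_add, add_div, hadd]
  have hmulS : ∀ (b : Polynomial C) (l : C), b.map φ = b → (∀ m : ℕ, E (θ ^ m * l) = 0) →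
      (b : PowerSeries C) * S l = S (b.eval θ * l) := by
    intro b l hb hl
    ext n
    rw [PowerSeries.coeff_mul, Finset.Nat.sum_antidiagonal_eq_sum_range_succ_mk]
    simp only [hSdef, PowerSeries.coeff_mk, Polynomial.coeff_coe]
    set M := max (b.natDegree + 1) (n + 1) with hM
    have hEsum : ∀ (s : Finset ℕ) (g : ℕ → C), E (∑ k ∈ s, g k) = ∑ k ∈ s, E (g k) :=
      fun s g => map_sum Ehom g s
    have hrhs : E (b.eval θ * l / θ ^ (n+1))
        = ∑ k ∈ Finset.range M, b.coeff k * E (θ ^ k * l / θ ^ (n+1)) := by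
      have hbev : b.eval θ = ∑ k ∈ Finset.range M, b.coeff k * θ ^ k :=
        Polynomial.eval_eq_sum_range' (lt_of_lt_of_le (Nat.lt_succ_self _) (le_max_left _ _)) θ
      rw [hbev, Finset.sum_mul, Finset.sum_div, hEsum]
      refine Finset.sum_congr rfl fun k _ => ?_
      rw [show b.coeff k * θ ^ k * l / θ ^ (n+1) = b.coeff k * (θ ^ k * l / θ ^ (n+1)) by ring,
        hsmul _ ((hfixiff b).2 hb k)]
    rw [hrhs]
    have hterm : ∀ k : ℕ, b.coeff k * E (θ ^ k * l / θ ^ (n+1))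
        = if k ≤ n then b.coeff k * E (l / θ ^ (n - k + 1)) else 0 := by
      intro k
      split_ifs with hk
      · congr 2
        have hpow : θ ^ (n+1) = θ ^ (n - k + 1) * θ ^ k := by
          rw [← pow_add]; congr 1; omega
        rw [hpow]
        field_simp
      · have hk' : θ ^ k * l / θ ^ (n+1) = θ ^ (k - (n+1)) * l := by
          have hpow : θ ^ k = θ ^ (k - (n+1)) * θ ^ (n+1) := by
            rw [← pow_add]; congr 1; omega
          rw [hpow]
          field_simp
        rw [hk', hl, mul_zero]
    have hlhs : ∑ k ∈ Finset.range (n+1), b.coeff k * E (l / θ ^ (n - k + 1))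
        = ∑ k ∈ Finset.range M, (if k ≤ n then b.coeff k * E (l / θ ^ (n - k + 1)) else 0) := by
      rw [← Finset.sum_subset (Finset.range_subset_range.2 (le_max_right (b.natDegree+1) (n+1)))
        (fun k _ hk => if_neg (by simp only [Finset.mem_range] at hk; omega))]
      exact Finset.sum_congr rfl fun k hk =>
        (if_pos (by simp only [Finset.mem_range] at hk; omega)).symm
    rw [hlhs]
    exact Finset.sum_congr rfl fun k _ => (hterm k).symm
  -- lattice facts
  have hΛ1 : ∀ m : ℕ, E (θ ^ m * 1) = 0 := by
    intro m
    have := hΛ 1 0 (Polynomial.map_one φ) (Polynomial.map_zero φ) m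
    simpa using this
  have hΛz : ∀ m : ℕ, E (θ ^ m * z) = 0 := by
    intro m
    have := hΛ 0 1 (Polynomial.map_zero φ) (Polynomial.map_one φ) m
    simpa using this
  set j : C := cδ.eval θ * z + dδ.eval θ with hjdef
  set jw : C := aδ.eval θ * z + bδ.eval θ with hjwdef
  have hΛj : ∀ m : ℕ, E (θ ^ m * j) = 0 := by
    intro m
    have := hΛ dδ cδ hdδ' hcδ' m
    rw [show dδ.eval θ + cδ.eval θ * z = j by rw [hjdef]; ring] at this
    exact this
  have hΛjw : ∀ m : ℕ, E (θ ^ m * jw) = 0 := by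
    intro m
    have := hΛ bδ aδ hbδ' haδ' m
    rw [show bδ.eval θ + aδ.eval θ * z = jw by rw [hjwdef]; ring] at this
    exact this
  -- nonvanishing of constant terms
  have hS1ne : PowerSeries.constantCoeff (S 1) ≠ 0 := by
    rw [hSdef]
    simp only [PowerSeries.constantCoeff_mk, zero_add, pow_one]
    intro h
    obtain ⟨a, b, ha, hb, hab⟩ := (hker _).1 h
    have ha' := (hfixiff a).1 ha
    have hb' := (hfixiff b).1 hb
    have h2 : (Polynomial.X * a - 1 : Polynomial C).eval θ
        + (Polynomial.X * b).eval θ * z = 0 := by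
      simp only [Polynomial.eval_sub, Polynomial.eval_mul, Polynomial.eval_X,
        Polynomial.eval_one]
      have hθab : 1 = θ * (a.eval θ + b.eval θ * z) := by
        rw [← hab, mul_comm, div_mul_cancel₀ _ hθ0]
      linear_combination -hθab
    obtain ⟨h3, _⟩ := hindep _ _
      (by rw [Polynomial.map_sub, Polynomial.map_mul, Polynomial.map_X, ha',
        Polynomial.map_one]) (by rw [Polynomial.map_mul, Polynomial.map_X, hb']) h2
    have := congrArg (fun P : Polynomial C => P.coeff 0) h3
    simp [Polynomial.mul_coeff_zero] at this
  have hSjne : PowerSeries.constantCoeff (S j) ≠ 0 := by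
    rw [hSdef]
    simp only [PowerSeries.constantCoeff_mk, zero_add, pow_one]
    intro h
    obtain ⟨a, b, ha, hb, hab⟩ := (hker _).1 h
    have ha' := (hfixiff a).1 ha
    have hb' := (hfixiff b).1 hb
    have h2 : (dδ - Polynomial.X * a : Polynomial C).eval θ
        + (cδ - Polynomial.X * b).eval θ * z = 0 := by
      simp only [Polynomial.eval_sub, Polynomial.eval_mul, Polynomial.eval_X]
      have hθab : j = θ * (a.eval θ + b.eval θ * z) := by
        rw [← hab, mul_comm, div_mul_cancel₀ _ hθ0]
      rw [hjdef] at hθab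
      linear_combination hθab
    obtain ⟨h3, h4⟩ := hindep _ _
      (by rw [Polynomial.map_sub, Polynomial.map_mul, Polynomial.map_X, ha', hdδ'])
      (by rw [Polynomial.map_sub, Polynomial.map_mul, Polynomial.map_X, hb', hcδ']) h2
    have hdd : dδ = Polynomial.X * a := by linear_combination h3
    have hcc : cδ = Polynomial.X * b := by linear_combination h4
    have hdet0 := congrArg (fun P : Polynomial C => P.coeff 0) hdetδ
    rw [hdd, hcc] at hdet0
    simp only [Polynomial.coeff_sub, Polynomial.mul_coeff_zero, Polynomial.coeff_X_zero,
      Polynomial.mul_coeff_zero, Polynomial.coeff_C_zero] at hdet0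
    apply huδ0
    rw [← hdet0]
    ring
  have hj0 : j ≠ 0 := by
    intro h
    have h2 : (dδ : Polynomial C).eval θ + cδ.eval θ * z = 0 := by
      rw [hjdef] at h; linear_combination h
    obtain ⟨h3, h4⟩ := hindep _ _ hdδ' hcδ' h2
    have hdet0 := congrArg (fun P : Polynomial C => P.coeff 0) hdetδ
    rw [h3, h4] at hdet0
    simp only [mul_zero, zero_mul, sub_zero, Polynomial.coeff_zero,
      Polynomial.coeff_C_zero, zero_sub, neg_eq_zero] at hdet0
    exact huδ0 hdet0.symm
  -- the general JSer computation
  have hJgen : ∀ (cp dp : Polynomial C) (x y : C), cp.map φ = cp → dp.map φ = dp →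
      (∀ m, E (θ^m * x) = 0) → (∀ m, E (θ^m * y) = 0) →
      PowerSeries.constantCoeff (S y) ≠ 0 →
      (cp : PowerSeries C) * (S x * (S y)⁻¹) + (dp : PowerSeries C)
        = S (cp.eval θ * x + dp.eval θ * y) * (S y)⁻¹ := by
    intro cp dp x y hcp hdp hx hy hy0
    rw [hSadd, ← hmulS cp x hcp hx, ← hmulS dp y hdp hy, add_mul, mul_assoc, mul_assoc,
      PowerSeries.mul_inv_cancel _ hy0, mul_one]
  have hs1 : ∀ x : C, s1Ser E θ x = S x := fun x => rfl
  have hs2 : s2Ser E θ = S 1 := rfl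
  -- the three JSer values
  have hJδ : JSer cδ dδ E θ z = S j * (S 1)⁻¹ := by
    rw [JSer, zSer, hs1, hs2, hJgen cδ dδ z 1 hcδ' hdδ' hΛz hΛ1 hS1ne, mul_one, hjdef]
  have hJγδ : JSer (cγ * aδ + dγ * cδ) (cγ * bδ + dγ * dδ) E θ z
      = S ((cγ * aδ + dγ * cδ).eval θ * z + (cγ * bδ + dγ * dδ).eval θ) * (S 1)⁻¹ := by
    rw [JSer, zSer, hs1, hs2, hJgen _ _ z 1
      (by rw [Polynomial.map_add, Polynomial.map_mul, Polynomial.map_mul, hcγ', haδ', hdγ', hcδ'])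
      (by rw [Polynomial.map_add, Polynomial.map_mul, Polynomial.map_mul, hcγ', hbδ', hdγ', hdδ'])
      hΛz hΛ1 hS1ne, mul_one]
  -- the twisted side
  have hs1' : s1Ser (expTw E j) θ (jw / j) = PowerSeries.C j⁻¹ * S jw := by
    ext n
    rw [s1Ser, hSdef]
    simp only [PowerSeries.coeff_mk, PowerSeries.coeff_C_mul, expTw]
    congr 2
    field_simp
  have hs2' : s2Ser (expTw E j) θ = PowerSeries.C j⁻¹ * S j := by
    ext n
    rw [s2Ser, hSdef]
    simp only [PowerSeries.coeff_mk, PowerSeries.coeff_C_mul, expTw]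
    congr 2
    rw [mul_one_div]
  have hztw : zSer (expTw E j) θ (jw / j) = S jw * (S j)⁻¹ := by
    rw [zSer, hs1', hs2', PowerSeries.mul_inv_rev, PowerSeries.C_inv, inv_inv]
    calc PowerSeries.C j⁻¹ * S jw * ((S j)⁻¹ * PowerSeries.C j)
        = (PowerSeries.C j⁻¹ * PowerSeries.C j) * (S jw * (S j)⁻¹) := by ring
      _ = S jw * (S j)⁻¹ := by rw [← map_mul, inv_mul_cancel₀ hj0, map_one, one_mul]
  have hJγ : JSer cγ dγ (expTw E j) θ (jw / j)
      = S (cγ.eval θ * jw + dγ.eval θ * j) * (S j)⁻¹ := by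
    rw [JSer, hztw, hJgen cγ dγ jw j hcγ' hdγ' hΛjw hΛj hSjne]
  -- assemble
  have hwdiv : (aδ.eval θ * z + bδ.eval θ) / (cδ.eval θ * z + dδ.eval θ) = jw / j := rfl
  rw [hJγδ, hwdiv, hJγ, hJδ]
  calc S ((cγ * aδ + dγ * cδ).eval θ * z + (cγ * bδ + dγ * dδ).eval θ) * (S 1)⁻¹
      = S (cγ.eval θ * jw + dγ.eval θ * j) * ((S j)⁻¹ * S j) * (S 1)⁻¹ := by
        rw [PowerSeries.inv_mul_cancel _ hSjne, mul_one]
        congr 2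
        rw [hjwdef, hjdef]
        simp only [Polynomial.eval_add, Polynomial.eval_mul]
        ring
    _ = S (cγ.eval θ * jw + dγ.eval θ * j) * (S j)⁻¹ * (S j * (S 1)⁻¹) := by ring
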